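/- For any τ ∈ (0,1), the expectile Bellman operator T_τ, defined by (T_τ V)(s) = V(s) + 2α E_{a,s'}[τ·max(δ,0) + (1−τ)·min(δ,0)] with δ = r(s,a,s') + γ V(s') − V(s), is a contraction in the sup-norm with modulus γ_τ = 1 − 2α(1−γ)·min(τ, 1−τ), i.e., ‖T_τ V1 − T_τ V2‖_∞ ≤ γ_τ ‖V1 − V2‖_∞, provided 2α·max(τ,1−τ) ≤ 1. -/
import Mathlib


open Finset

/-- For `τ ∈ (0,1)`, the expectile Bellman operator `T_τ` is a
`γ_τ`-contraction in the sup-norm with `γ_τ = 1 − 2α(1−γ)·min(τ, 1−τ)`,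
provided `2α·max(τ,1−τ) ≤ 1`. -/
theorem expectile_contraction {S A : Type*} [Fintype S] [Nonempty S] [Fintype A] [Nonempty A]
    (pol : S → A → ℝ) (P : S → A → S → ℝ) (R : S → A → S → ℝ) (γ α τ : ℝ)
    (hpol0 : ∀ s a, 0 ≤ pol s a) (hpol1 : ∀ s, ∑ a, pol s a = 1)
    (hP0 : ∀ s a s', 0 ≤ P s a s') (hP1 : ∀ s a, ∑ s', P s a s' = 1)
    (hγ0 : 0 ≤ γ) (hγ1 : γ < 1) (hτ0 : 0 < τ) (hτ1 : τ < 1)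
    (hα0 : 0 < α) (hα : 2 * α * max τ (1 - τ) ≤ 1)
    (Tτ : (S → ℝ) → (S → ℝ))
    (hTτ : ∀ V s, Tτ V s =
      V s + 2 * α * ∑ a, ∑ s', pol s a * P s a s' *
        (τ * max (R s a s' + γ * V s' - V s) 0
          + (1 - τ) * min (R s a s' + γ * V s' - V s) 0))
    (V1 V2 : S → ℝ) :
    ‖Tτ V1 - Tτ V2‖ ≤ (1 - 2 * α * (1 - γ) * min τ (1 - τ)) * ‖V1 - V2‖ := by
  classical
  have hm0 : 0 < min τ (1 - τ) := lt_min hτ0 (by linarith)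
  have hmτ : min τ (1 - τ) ≤ τ := min_le_left _ _
  have hmτ' : min τ (1 - τ) ≤ 1 - τ := min_le_right _ _
  have hτM : τ ≤ max τ (1 - τ) := le_max_left _ _
  have hτM' : 1 - τ ≤ max τ (1 - τ) := le_max_right _ _
  have hmM : min τ (1 - τ) ≤ max τ (1 - τ) := hmτ.trans hτM
  set m := min τ (1 - τ)
  set M := max τ (1 - τ)
  set g : ℝ → ℝ := fun x => τ * max x 0 + (1 - τ) * min x 0 with hg
  have H : ∀ x y : ℝ, y ≤ x → m * (x - y) ≤ g x - g y ∧ g x - g y ≤ M * (x - y) := by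
    intro x y hxy
    have hp : 0 ≤ max x 0 - max y 0 := sub_nonneg.mpr (max_le_max hxy le_rfl)
    have hq : 0 ≤ min x 0 - min y 0 := sub_nonneg.mpr (min_le_min hxy le_rfl)
    have hsx : max x 0 + min x 0 = x := by rw [max_add_min]; ring
    have hsy : max y 0 + min y 0 = y := by rw [max_add_min]; ring
    constructor <;> simp only [hg] <;> nlinarith
  have key : ∀ x y : ℝ, ∃ c : ℝ, m ≤ c ∧ c ≤ M ∧ g x - g y = c * (x - y) := by
    intro x y
    rcases lt_trichotomy x y with h | h | h
    · obtain ⟨h1, h2⟩ := H y x h.le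
      have hxy : 0 < y - x := by linarith
      refine ⟨(g y - g x) / (y - x), (le_div_iff₀ hxy).mpr h1, (div_le_iff₀ hxy).mpr h2, ?_⟩
      field_simp
      ring
    · exact ⟨m, le_rfl, hmM, by simp [h]⟩
    · obtain ⟨h1, h2⟩ := H x y h.le
      have hxy : 0 < x - y := by linarith
      refine ⟨(g x - g y) / (x - y), (le_div_iff₀ hxy).mpr h1, (div_le_iff₀ hxy).mpr h2, ?_⟩
      field_simp
  choose θ hθm hθM hθeq using key
  set D := ‖V1 - V2‖ with hD
  have hD0 : 0 ≤ D := norm_nonneg _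
  have hDs : ∀ s, |V1 s - V2 s| ≤ D := by
    intro s
    have := norm_le_pi_norm (V1 - V2) s
    simpa [Real.norm_eq_abs] using this
  have hfac : 0 ≤ 1 - 2 * α * (1 - γ) * m := by
    nlinarith [mul_nonneg (mul_nonneg (by linarith : (0:ℝ) ≤ 2 * α) hm0.le) hγ0,
      mul_nonneg hα0.le (sub_nonneg.mpr hmM)]
  have hC0 : 0 ≤ (1 - 2 * α * (1 - γ) * m) * D := mul_nonneg hfac hD0
  rw [pi_norm_le_iff_of_nonneg hC0]
  intro s
  rw [Pi.sub_apply, Real.norm_eq_abs]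
  have hw1 : ∑ a, ∑ s', pol s a * P s a s' = 1 := by
    rw [show (1:ℝ) = ∑ a, pol s a from (hpol1 s).symm]
    refine Finset.sum_congr rfl fun a _ => ?_
    rw [← Finset.mul_sum, hP1, mul_one]
  have hdiff : Tτ V1 s - Tτ V2 s =
      ∑ a, ∑ s', pol s a * P s a s' *
        ((V1 s - V2 s) + 2 * α *
          θ (R s a s' + γ * V1 s' - V1 s) (R s a s' + γ * V2 s' - V2 s)
          * (γ * (V1 s' - V2 s') - (V1 s - V2 s))) := by
    have e1 : ∀ a s', pol s a * P s a s' *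
        ((V1 s - V2 s) + 2 * α *
          θ (R s a s' + γ * V1 s' - V1 s) (R s a s' + γ * V2 s' - V2 s)
          * (γ * (V1 s' - V2 s') - (V1 s - V2 s)))
        = pol s a * P s a s' * (V1 s - V2 s)
          + 2 * α * (pol s a * P s a s' * g (R s a s' + γ * V1 s' - V1 s))
          - 2 * α * (pol s a * P s a s' * g (R s a s' + γ * V2 s' - V2 s)) := by
      intro a s'
      have h := hθeq (R s a s' + γ * V1 s' - V1 s) (R s a s' + γ * V2 s' - V2 s)
      linear_combination (-(2 * α * (pol s a * P s a s'))) * h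
    have hcomb : (∑ a, ∑ s', pol s a * P s a s' *
          ((V1 s - V2 s) + 2 * α *
            θ (R s a s' + γ * V1 s' - V1 s) (R s a s' + γ * V2 s' - V2 s)
            * (γ * (V1 s' - V2 s') - (V1 s - V2 s))))
        = (V1 s - V2 s)
          + 2 * α * (∑ a, ∑ s', pol s a * P s a s' * g (R s a s' + γ * V1 s' - V1 s))
          - 2 * α * (∑ a, ∑ s', pol s a * P s a s' * g (R s a s' + γ * V2 s' - V2 s)) := by
      rw [Finset.sum_congr rfl fun a _ => Finset.sum_congr rfl fun s' _ => e1 a s']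
      simp only [Finset.sum_sub_distrib, Finset.sum_add_distrib, ← Finset.mul_sum]
      have hs : (∑ a, ∑ s', pol s a * P s a s' * (V1 s - V2 s)) = V1 s - V2 s := by
        simp only [← Finset.sum_mul]
        rw [hw1, one_mul]
      rw [hs]
    rw [hTτ, hTτ, hcomb]
    simp only [hg]
    ring
  rw [hdiff]
  have hterm : ∀ a s', |pol s a * P s a s' *
        ((V1 s - V2 s) + 2 * α *
          θ (R s a s' + γ * V1 s' - V1 s) (R s a s' + γ * V2 s' - V2 s)
          * (γ * (V1 s' - V2 s') - (V1 s - V2 s)))|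
      ≤ pol s a * P s a s' * ((1 - 2 * α * (1 - γ) * m) * D) := by
    intro a s'
    set c := θ (R s a s' + γ * V1 s' - V1 s) (R s a s' + γ * V2 s' - V2 s) with hc
    have hcm : m ≤ c := hθm _ _
    have hcM : c ≤ M := hθM _ _
    have h2αc : 2 * α * c ≤ 1 := by nlinarith
    have h2αc0 : 0 ≤ 2 * α * c := by nlinarith
    have hw0 : 0 ≤ pol s a * P s a s' := mul_nonneg (hpol0 s a) (hP0 s a s')
    rw [abs_mul, abs_of_nonneg hw0]
    refine mul_le_mul_of_nonneg_left ?_ hw0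
    have e : (V1 s - V2 s) + 2 * α * c * (γ * (V1 s' - V2 s') - (V1 s - V2 s))
        = (1 - 2 * α * c) * (V1 s - V2 s) + (2 * α * c * γ) * (V1 s' - V2 s') := by ring
    rw [e]
    calc |(1 - 2 * α * c) * (V1 s - V2 s) + (2 * α * c * γ) * (V1 s' - V2 s')|
        ≤ |(1 - 2 * α * c) * (V1 s - V2 s)| + |(2 * α * c * γ) * (V1 s' - V2 s')| :=
          abs_add_le _ _
      _ = (1 - 2 * α * c) * |V1 s - V2 s| + (2 * α * c * γ) * |V1 s' - V2 s'| := by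
          rw [abs_mul, abs_mul, abs_of_nonneg (by linarith : (0:ℝ) ≤ 1 - 2 * α * c),
            abs_of_nonneg (mul_nonneg h2αc0 hγ0)]
      _ ≤ (1 - 2 * α * (1 - γ) * m) * D := by
          nlinarith [mul_nonneg (by linarith : (0:ℝ) ≤ 1 - 2 * α * c)
              (sub_nonneg.mpr (hDs s)),
            mul_nonneg (mul_nonneg h2αc0 hγ0) (sub_nonneg.mpr (hDs s')),
            mul_nonneg (mul_nonneg (mul_nonneg (by linarith : (0:ℝ) ≤ 2 * α)
              (by linarith : (0:ℝ) ≤ 1 - γ)) (by linarith : (0:ℝ) ≤ c - m)) hD0]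
  calc |∑ a, ∑ s', pol s a * P s a s' *
        ((V1 s - V2 s) + 2 * α *
          θ (R s a s' + γ * V1 s' - V1 s) (R s a s' + γ * V2 s' - V2 s)
          * (γ * (V1 s' - V2 s') - (V1 s - V2 s)))|
      ≤ ∑ a, ∑ s', |pol s a * P s a s' *
        ((V1 s - V2 s) + 2 * α *
          θ (R s a s' + γ * V1 s' - V1 s) (R s a s' + γ * V2 s' - V2 s)
          * (γ * (V1 s' - V2 s') - (V1 s - V2 s)))| :=
        (Finset.abs_sum_le_sum_abs _ _).trans
          (Finset.sum_le_sum fun a _ => Finset.abs_sum_le_sum_abs _ _)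
    _ ≤ ∑ a, ∑ s', pol s a * P s a s' * ((1 - 2 * α * (1 - γ) * m) * D) :=
        Finset.sum_le_sum fun a _ => Finset.sum_le_sum fun s' _ => hterm a s'
    _ = (1 - 2 * α * (1 - γ) * m) * D := by
        simp only [← Finset.sum_mul, hw1, one_mul]
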